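/- Let n ≥ 1 and let A₁, A₂ be complex symmetric 2n × 2n matrices whose real parts Re A₁, Re A₂ (the real matrices of entrywise real parts) are positive definite. With J the standard symplectic 2n × 2n matrix [[0, −I_n],[I_n, 0]], the matrix D = I − (1/4)·A₂ J A₁ J is invertible. -/

import Mathlib

open Matrix Complex

lemma quad_pos {m : Type*} [Fintype m] (A : Matrix m m ℂ)
    (hsym : A.transpose = A) (hre : (A.map Complex.re).PosDef)
    (z : m → ℂ) (hz : z ≠ 0) :
    0 < (star z ⬝ᵥ A.mulVec z).re := by
  classical
  set u : m → ℝ := fun i => (z i).re with hu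
  set v : m → ℝ := fun i => (z i).im with hv
  have key : (star z ⬝ᵥ A.mulVec z).re
      = (u ⬝ᵥ (A.map Complex.re).mulVec u + v ⬝ᵥ (A.map Complex.re).mulVec v)
        + ∑ i, ∑ j, (A i j).im * (v i * u j - u i * v j) := by
    have e : ∀ i j, (star (z i) * (A i j * z j)).re
        = u i * ((A i j).re * u j) + v i * ((A i j).re * v j)
          + (A i j).im * (v i * u j - u i * v j) := by
      intro i j
      simp only [Complex.mul_re, Complex.mul_im, hu, hv,
        RCLike.star_def, Complex.conj_re, Complex.conj_im]
      ring
    simp only [dotProduct, mulVec, Pi.star_apply, map_apply, Finset.mul_sum,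
      Complex.re_sum]
    simp_rw [e]
    simp [Finset.sum_add_distrib]
  have cross : ∑ i, ∑ j, (A i j).im * (v i * u j - u i * v j) = 0 := by
    have h2 : ∑ i, ∑ j, (A i j).im * (v i * u j - u i * v j)
        = -∑ i, ∑ j, (A i j).im * (v i * u j - u i * v j) := by
      conv_lhs => rw [Finset.sum_comm]
      rw [← Finset.sum_neg_distrib]
      apply Finset.sum_congr rfl; intro i _
      rw [← Finset.sum_neg_distrib]
      apply Finset.sum_congr rfl; intro j _
      have : A j i = A i j := by
        conv_lhs => rw [← hsym]
        rfl
      rw [this]; ring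
    linarith
  rw [key, cross, add_zero]
  have huv : u ≠ 0 ∨ v ≠ 0 := by
    by_contra h
    push_neg at h
    apply hz
    funext i
    have h1 : u i = 0 := by rw [h.1]; rfl
    have h2 : v i = 0 := by rw [h.2]; rfl
    exact Complex.ext h1 h2
  rcases huv with h | h
  · have := hre.dotProduct_mulVec_pos h
    have h2 := hre.posSemidef.dotProduct_mulVec_nonneg v
    simp only [star_trivial] at this h2
    linarith [this, h2]
  · have := hre.dotProduct_mulVec_pos h
    have h2 := hre.posSemidef.dotProduct_mulVec_nonneg u
    simp only [star_trivial] at this h2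
    linarith [this, h2]

theorem D_invertible
    (n : ℕ) (hn : 1 ≤ n)
    (A₁ A₂ : Matrix (Fin n ⊕ Fin n) (Fin n ⊕ Fin n) ℂ)
    (hA₁sym : A₁.transpose = A₁) (hA₂sym : A₂.transpose = A₂)
    (hA₁re : (A₁.map Complex.re).PosDef) (hA₂re : (A₂.map Complex.re).PosDef)
    (J : Matrix (Fin n ⊕ Fin n) (Fin n ⊕ Fin n) ℂ)
    (hJ : J = Matrix.fromBlocks 0 (-1) 1 0) :
    IsUnit (1 - (1 / 4 : ℂ) • (A₂ * J * A₁ * J)) := by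
  classical
  rw [Matrix.isUnit_iff_isUnit_det, isUnit_iff_ne_zero]
  intro hdet
  obtain ⟨z, hz, hzeq⟩ := (Matrix.exists_mulVec_eq_zero_iff).2 hdet
  -- J facts
  have hJJ : J * J = -1 := by
    rw [hJ, Matrix.fromBlocks_multiply]
    have : (-1 : Matrix (Fin n ⊕ Fin n) (Fin n ⊕ Fin n) ℂ)
        = Matrix.fromBlocks (-1) 0 0 (-1) := by
      ext i j
      rcases i with i | i <;> rcases j with j | j <;>
        simp [Matrix.fromBlocks, Matrix.one_apply]
    rw [this]
    simp
  have hJH : Jᴴ = -J := by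
    rw [hJ]
    ext i j
    rcases i with i | i <;> rcases j with j | j <;>
      simp [Matrix.fromBlocks, Matrix.conjTranspose_apply, Matrix.one_apply, eq_comm]
  have hJinj : ∀ y : (Fin n ⊕ Fin n) → ℂ, J *ᵥ y = 0 → y = 0 := by
    intro y hy
    have : (J * J) *ᵥ y = 0 := by rw [← Matrix.mulVec_mulVec, hy, Matrix.mulVec_zero]
    rw [hJJ, Matrix.neg_mulVec, Matrix.one_mulVec, neg_eq_zero] at this
    exact this
  -- the eigen-equation
  set w : (Fin n ⊕ Fin n) → ℂ := J *ᵥ z with hw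
  set s : (Fin n ⊕ Fin n) → ℂ := A₁ *ᵥ w with hs
  set t : (Fin n ⊕ Fin n) → ℂ := J *ᵥ s with ht
  have hA2t : A₂ *ᵥ t = (4 : ℂ) • z := by
    have h1 : (A₂ * J * A₁ * J) *ᵥ z = A₂ *ᵥ t := by
      rw [ht, hs, hw]
      simp only [Matrix.mulVec_mulVec]
      rw [show A₂ * J * A₁ * J = A₂ * (J * (A₁ * J)) by rw [mul_assoc, mul_assoc]]
    have h2 : z - (1 / 4 : ℂ) • ((A₂ * J * A₁ * J) *ᵥ z) = 0 := by
      rw [← Matrix.one_mulVec z] ; rw [← Matrix.one_mulVec z] at hzeq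
      rw [← hzeq, Matrix.sub_mulVec, Matrix.smul_mulVec]
      simp [Matrix.one_mulVec]
    rw [h1] at h2
    have h3 := sub_eq_zero.mp h2
    rw [h3, smul_smul]
    norm_num
  have hzA2t : z = (1 / 4 : ℂ) • (A₂ *ᵥ t) := by
    rw [hA2t, smul_smul]; norm_num
  -- nonvanishing
  have hwne : w ≠ 0 := fun h => hz (hJinj z h)
  have hpos1 : 0 < (star w ⬝ᵥ A₁ *ᵥ w).re := quad_pos A₁ hA₁sym hA₁re w hwne
  have hsne : s ≠ 0 := by
    intro h
    rw [hs] at h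
    rw [h] at hpos1
    · simp at hpos1
  have htne : t ≠ 0 := fun h => hsne (hJinj s h)
  have hpos2 : 0 < (star t ⬝ᵥ A₂ *ᵥ t).re := quad_pos A₂ hA₂sym hA₂re t htne
  -- key identity
  have keyeq : star w ⬝ᵥ s = -(1 / 4 : ℂ) * (star (A₂ *ᵥ t) ⬝ᵥ t) := by
    have hw' : w = (1 / 4 : ℂ) • (J *ᵥ (A₂ *ᵥ t)) := by
      rw [hw, hzA2t, Matrix.mulVec_smul]
    rw [hw', star_smul, smul_dotProduct, Matrix.star_mulVec,
      ← Matrix.dotProduct_mulVec, hJH, Matrix.neg_mulVec, ← ht,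
      dotProduct_neg]
    simp only [starRingEnd_apply, smul_eq_mul]
    rw [show star (1 / 4 : ℂ) = (1 / 4 : ℂ) by simp]
    ring
  -- conjugation identity
  have conjeq : (star (A₂ *ᵥ t) ⬝ᵥ t) = star (star t ⬝ᵥ A₂ *ᵥ t) := by
    rw [Matrix.star_dotProduct]
  have hre : (star w ⬝ᵥ s).re = -(1 / 4) * (star t ⬝ᵥ A₂ *ᵥ t).re := by
    rw [keyeq, conjeq]
    simp [Complex.mul_re]
  rw [hs] at hre
  linarith
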